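/- Let H : [t₀, t₂] → ℝ be differentiable with H'(t) ≥ F·H(t)² - E on [t₀,t₂], where E, F > 0. Let Q = max(16E, √(16E/F)) and suppose H(t₂) ≤ -Q. Then H(t) ≤ -Q/2 for all t ∈ [t₀, t₂], and H(t₂) ≥ -16/(F(t₂ - t₀)) provided t₂ > t₀. Consequently H(t₂) ≥ -max(Q, 16/(F(t₂-t₀))). -/

import Mathlib

lemma deriv_lb (a b C : ℝ) (f f' : ℝ → ℝ) (hab : a ≤ b)
    (hd : ∀ t ∈ Set.Icc a b, HasDerivAt f (f' t) t)
    (hC : ∀ t ∈ Set.Icc a b, C ≤ f' t) :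
    C * (b - a) ≤ f b - f a := by
  apply Convex.mul_sub_le_image_sub_of_le_deriv (convex_Icc a b)
  · exact fun t htI => ((hd t htI).continuousAt).continuousWithinAt
  · exact fun t htI =>
      ((hd t (interior_subset htI)).differentiableAt).differentiableWithinAt
  · intro t htI
    rw [(hd t (interior_subset htI)).deriv]
    exact hC t (interior_subset htI)
  · exact Set.left_mem_Icc.mpr hab
  · exact Set.right_mem_Icc.mpr hab
  · exact hab

theorem calculus_lemma (t₀ t₂ E F Q : ℝ) (H H' : ℝ → ℝ)
    (hE : 0 < E) (hF : 0 < F) (ht : t₀ ≤ t₂) (hlen : t₂ - t₀ ≤ 2)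
    (hderiv : ∀ t ∈ Set.Icc t₀ t₂, HasDerivAt H (H' t) t)
    (hineq : ∀ t ∈ Set.Icc t₀ t₂, H' t ≥ F * (H t) ^ 2 - E)
    (hQ : Q = max (16 * E) (Real.sqrt (16 * E / F)))
    (hH : H t₂ ≤ -Q) :
    (∀ t ∈ Set.Icc t₀ t₂, H t ≤ -Q / 2) ∧
    (t₀ < t₂ →
      H t₂ ≥ -16 / (F * (t₂ - t₀)) ∧
      H t₂ ≥ -max Q (16 / (F * (t₂ - t₀)))) := by
  have hQE : 16 * E ≤ Q := hQ ▸ le_max_left _ _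
  have hQ0 : 0 < Q := lt_of_lt_of_le (by linarith) hQE
  have hQsq : 16 * E ≤ Q ^ 2 * F := by
    have h1 : Real.sqrt (16 * E / F) ≤ Q := hQ ▸ le_max_right _ _
    have h2 : (0:ℝ) ≤ 16 * E / F := by positivity
    have h3 : 16 * E / F ≤ Q ^ 2 := by
      nlinarith [Real.sq_sqrt h2, Real.sqrt_nonneg (16 * E / F)]
    rw [div_le_iff₀ hF] at h3; linarith
  -- Part 1: H t ≤ -Q/2 on Icc
  have part1 : ∀ t ∈ Set.Icc t₀ t₂, H t ≤ -Q / 2 := by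
    intro t htI
    obtain ⟨ht0, ht2⟩ := htI
    have key : (-E) * (t₂ - t) ≤ H t₂ - H t := by
      apply deriv_lb t t₂ (-E) H H' ht2
      · intro s hs; exact hderiv s ⟨le_trans ht0 hs.1, hs.2⟩
      · intro s hs
        have := hineq s ⟨le_trans ht0 hs.1, hs.2⟩
        nlinarith [sq_nonneg (H s)]
    nlinarith
  refine ⟨part1, fun htlt => ?_⟩
  -- Part 2
  have hHne : ∀ t ∈ Set.Icc t₀ t₂, H t < 0 := fun t htI =>
    lt_of_le_of_lt (part1 t htI) (by linarith)
  have hHsq : ∀ t ∈ Set.Icc t₀ t₂, 4 * E ≤ F * (H t) ^ 2 := by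
    intro t htI
    have h1 := part1 t htI
    have hsq : Q ^ 2 / 4 ≤ (H t) ^ 2 := by
      nlinarith [sq_nonneg (H t + Q / 2),
        mul_nonneg (show (0:ℝ) ≤ -Q / 2 - H t by linarith) hQ0.le]
    nlinarith [mul_le_mul_of_nonneg_left hsq hF.le]
  have hGd : ∀ t ∈ Set.Icc t₀ t₂, HasDerivAt (fun s => -(H s)⁻¹) (H' t / (H t) ^ 2) t := by
    intro t htI
    have h := ((hderiv t htI).inv (ne_of_lt (hHne t htI))).neg
    rw [show H' t / H t ^ 2 = -(-H' t / H t ^ 2) by ring]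
    exact h
  have key2 : F / 2 * (t₂ - t₀) ≤ -(H t₂)⁻¹ - -(H t₀)⁻¹ := by
    apply deriv_lb t₀ t₂ (F/2) (fun s => -(H s)⁻¹) (fun t => H' t / (H t) ^ 2) ht hGd
    intro t htI
    have h1 := hineq t htI
    have h2 := hHsq t htI
    have h3 : 0 < (H t) ^ 2 := by
      have h4 := hHne t htI
      nlinarith [mul_pos_of_neg_of_neg h4 h4]
    rw [le_div_iff₀ h3]
    nlinarith [mul_nonneg hF.le h3.le]
  have hHt0 : H t₀ < 0 := hHne t₀ ⟨le_refl _, ht⟩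
  have hHt2 : H t₂ < 0 := hHne t₂ ⟨ht, le_refl _⟩
  have hGt0 : 0 < -(H t₀)⁻¹ := neg_pos.mpr (inv_lt_zero.mpr hHt0)
  have hGt2 : F / 2 * (t₂ - t₀) ≤ -(H t₂)⁻¹ := by linarith
  have hd : 0 < F * (t₂ - t₀) := by
    have : 0 < t₂ - t₀ := by linarith
    positivity
  have hGval : -(H t₂)⁻¹ * (-H t₂) = 1 := by
    field_simp [div_self hHt2.ne]
    exact div_self hHt2.ne
  have h5 := mul_le_mul_of_nonneg_right hGt2 (show (0:ℝ) ≤ -H t₂ by linarith)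
  rw [hGval] at h5
  have hmain : -16 / (F * (t₂ - t₀)) ≤ H t₂ := by
    rw [div_le_iff₀ hd]
    nlinarith
  refine ⟨hmain, ?_⟩
  have : -max Q (16 / (F * (t₂ - t₀))) ≤ -(16 / (F * (t₂ - t₀))) :=
    neg_le_neg (le_max_right _ _)
  have heq : -(16 / (F * (t₂ - t₀))) = -16 / (F * (t₂ - t₀)) := by ring
  linarith [hmain]
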